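/- The partial derivative of the Black-Scholes put price with respect to the initial stock price is Φ(d) − 1, where p(x,K,r,T,σ) = c(x,K,r,T,σ) − x + K·e^{−rT} and c is given by the Black-Scholes formula with d = (ln(x/K) + T(r + σ²/2))/(σ√T). -/

import Mathlib

open MeasureTheory ProbabilityTheory Real Set

/-- Standard normal CDF. -/
noncomputable def Phi (x : ℝ) : ℝ :=
  ∫ y in Set.Iic x, (Real.sqrt (2 * Real.pi))⁻¹ * Real.exp (-(y ^ 2) / 2)

/-- Standard normal density. -/
noncomputable def phi (y : ℝ) : ℝ := (Real.sqrt (2 * Real.pi))⁻¹ * Real.exp (-(y ^ 2) / 2)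

/-- Black-Scholes d value. -/
noncomputable def dBS (S₀ K r T σ : ℝ) : ℝ :=
  (Real.log (S₀ / K) + T * (r + σ ^ 2 / 2)) / (σ * Real.sqrt T)

/-- Black-Scholes call price (closed form). -/
noncomputable def callBS (S₀ K r T σ : ℝ) : ℝ :=
  S₀ * Phi (dBS S₀ K r T σ) - K * Real.exp (-(r * T)) * Phi (dBS S₀ K r T σ - σ * Real.sqrt T)

/-- Black-Scholes put price (via put-call parity). -/
noncomputable def putBS (S₀ K r T σ : ℝ) : ℝ :=
  callBS S₀ K r T σ - S₀ + K * Real.exp (-(r * T))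

lemma continuous_phi : Continuous phi := by
  unfold phi
  fun_prop

lemma integrable_phi : Integrable phi := by
  have h : Integrable (fun y : ℝ => Real.exp (-(1/2 : ℝ) * y ^ 2)) :=
    integrable_exp_neg_mul_sq (by norm_num)
  have h2 := h.const_mul (Real.sqrt (2 * Real.pi))⁻¹
  convert h2 using 2 with y
  unfold phi
  ring_nf

lemma hasDerivAt_Phi (x : ℝ) : HasDerivAt Phi (phi x) x := by
  have heq : Phi = fun y => (∫ t in (0:ℝ)..y, phi t) + Phi 0 := by
    funext y
    have h := intervalIntegral.integral_Iic_sub_Iic (μ := volume) (f := phi)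
      (a := (0:ℝ)) (b := y) integrable_phi.integrableOn integrable_phi.integrableOn
    have h1 : Phi y = ∫ t in Set.Iic y, phi t := rfl
    have h2 : Phi 0 = ∫ t in Set.Iic (0:ℝ), phi t := rfl
    rw [h1, h2]
    linarith
  rw [heq]
  exact ((continuous_phi.integral_hasStrictDerivAt 0 x).hasDerivAt).add_const _

theorem stmt3 (K σ T r : ℝ) (hK : 0 < K) (hσ : 0 < σ) (hT : 0 < T) (hr : 0 ≤ r) :
    ∀ x : ℝ, 0 < x →
      HasDerivAt (fun y => putBS y K r T σ) (Phi (dBS x K r T σ) - 1) x := by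
  intro x hx
  set s : ℝ := σ * Real.sqrt T with hs_def
  have hsT : Real.sqrt T > 0 := Real.sqrt_pos.mpr hT
  have hs : s ≠ 0 := by positivity
  set d : ℝ := dBS x K r T σ with hd_def
  -- derivative of dBS in first variable
  have hd : HasDerivAt (fun y => dBS y K r T σ) (1 / (x * s)) x := by
    have hlog : HasDerivAt (fun y => Real.log (y / K)) (1 / x) x := by
      have h1 : HasDerivAt (fun y : ℝ => y / K) (1 / K) x := (hasDerivAt_id x).div_const K
      have h2 := (Real.hasDerivAt_log (by positivity : x / K ≠ 0)).comp x h1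
      rw [show (1:ℝ) / x = (x / K)⁻¹ * (1 / K) by field_simp]
      exact h2
    have h3 := ((hlog.add_const (T * (r + σ ^ 2 / 2))).div_const s)
    rw [show 1 / (x * s) = 1 / x / s by rw [div_div]]
    exact h3
  -- key identity: x * phi d = K * exp(-(r*T)) * phi (d - s)
  have hds : d * s = Real.log (x / K) + T * (r + σ ^ 2 / 2) := by
    rw [hd_def, dBS]
    exact div_mul_cancel₀ _ hs
  have hs2 : s ^ 2 = σ ^ 2 * T := by
    rw [hs_def, mul_pow, Real.sq_sqrt hT.le]
  have key : K * Real.exp (-(r * T)) * phi (d - s) = x * phi d := by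
    unfold phi
    rw [show -((d - s) ^ 2) / 2 = -(d ^ 2) / 2 + (d * s - s ^ 2 / 2) by ring,
      Real.exp_add, hds, hs2,
      show Real.log (x / K) + T * (r + σ ^ 2 / 2) - σ ^ 2 * T / 2
        = Real.log (x / K) + r * T by ring,
      Real.exp_add, Real.exp_log (by positivity), Real.exp_neg]
    field_simp
  -- assemble
  have h1 : HasDerivAt (fun y => Phi (dBS y K r T σ)) (phi d * (1 / (x * s))) x :=
    by have := (hasDerivAt_Phi d).comp x hd; exact this
  have h2 : HasDerivAt (fun y => y * Phi (dBS y K r T σ))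
      (1 * Phi d + x * (phi d * (1 / (x * s)))) x :=
    (hasDerivAt_id x).mul h1
  have h3 : HasDerivAt (fun y => Phi (dBS y K r T σ - s)) (phi (d - s) * (1 / (x * s))) x :=
    by have := (hasDerivAt_Phi (d - s)).comp x (hd.sub_const s); exact this
  have h4 : HasDerivAt (fun y => callBS y K r T σ)
      (1 * Phi d + x * (phi d * (1 / (x * s)))
        - K * Real.exp (-(r * T)) * (phi (d - s) * (1 / (x * s)))) x := by
    unfold callBS
    exact h2.sub (h3.const_mul _)
  have h5 : HasDerivAt (fun y => putBS y K r T σ)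
      (1 * Phi d + x * (phi d * (1 / (x * s)))
        - K * Real.exp (-(r * T)) * (phi (d - s) * (1 / (x * s))) - 1) x := by
    unfold putBS
    exact (h4.sub (hasDerivAt_id x)).add_const _
  convert h5 using 1
  have e : K * Real.exp (-(r * T)) * (phi (d - s) * (1 / (x * s)))
      = x * (phi d * (1 / (x * s))) := by
    rw [show K * Real.exp (-(r * T)) * (phi (d - s) * (1 / (x * s)))
        = K * Real.exp (-(r * T)) * phi (d - s) * (1 / (x * s)) by ring, key]
    ring
  rw [e]
  ring
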